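/- Let Z, Y ∈ ℝ^{n×k} have orthonormal columns and let Π_Z = Z Zᵀ and Π_Y = Y Yᵀ be the corresponding orthogonal projection matrices. Then min over k×k orthogonal matrices Q of ‖Z − Y Q‖_F is at most ‖Π_Z − Π_Y‖_F. -/

import Mathlib

open Matrix

noncomputable section

/-- Frobenius norm of a real matrix. -/
def frob {m n : Type*} [Fintype m] [Fintype n] (M : Matrix m n ℝ) : ℝ :=
  Real.sqrt (∑ i, ∑ j, (M i j) ^ 2)

section helpers
variable {k : ℕ}
variable {k : ℕ}

lemma sum_sq_eq_trace {m n : ℕ} (X : Matrix (Fin m) (Fin n) ℝ) :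
    ∑ i, ∑ j, (X i j) ^ 2 = trace (Xᵀ * X) := by
  simp only [trace, diag, mul_apply, transpose_apply, sq]
  rw [Finset.sum_comm]

open scoped MatrixOrder in
lemma trace_mul_nonneg' {A B : Matrix (Fin k) (Fin k) ℝ}
    (hA : A.PosSemidef) (hB : B.PosSemidef) : 0 ≤ trace (A * B) := by
  have h1 : A = CFC.sqrt A * CFC.sqrt A := (CFC.sqrt_mul_sqrt_self A hA.nonneg).symm
  have h2 : trace (A * B) = trace (CFC.sqrt A * B * CFC.sqrt A) := by
    conv_lhs => rw [h1]
    rw [mul_assoc, trace_mul_comm, mul_assoc]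
  have h3 : (CFC.sqrt A * B * (CFC.sqrt A)ᴴ).PosSemidef := hB.mul_mul_conjTranspose_same (CFC.sqrt A)
  rw [(CFC.sqrt_nonneg A).posSemidef.isHermitian.eq] at h3
  rw [h2]
  exact h3.trace_nonneg

lemma isometry_dot {p q : ℕ} (A : Matrix (Fin p) (Fin q) ℝ) (hA : Aᵀ * A = 1)
    (w : Fin q → ℝ) : (A *ᵥ w) ⬝ᵥ (A *ᵥ w) = w ⬝ᵥ w := by
  rw [dotProduct_mulVec, vecMul_mulVec, hA, vecMul_one]

lemma transpose_stdBasis (i j : Fin k) (c : ℝ) :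
    (single i j c)ᵀ = single j i c := by
  ext a b
  simp only [transpose_apply, single, of_apply]
  by_cases h1 : i = b <;> by_cases h2 : j = a <;> simp [h1, h2]

lemma trace_stdBasis_mul (i j : Fin k) (S : Matrix (Fin k) (Fin k) ℝ) :
    trace (single i j (1:ℝ) * S) = S j i := by
  rw [trace]
  rw [Finset.sum_eq_single i]
  · simp [diag]
  · intro a _ ha
    simp [diag, single_mul_apply_of_ne (h := ha)]
  · simp

lemma rotation_facts (i j : Fin k) (hij : i ≠ j) (c s : ℝ) (hcs : c ^ 2 + s ^ 2 = 1) :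
    ∃ R : Matrix (Fin k) (Fin k) ℝ, Rᵀ * R = 1 ∧
      ∀ S : Matrix (Fin k) (Fin k) ℝ,
        trace (Rᵀ * S) = trace S + (c - 1) * (S i i + S j j) + s * (S i j - S j i) := by
  set D : Matrix (Fin k) (Fin k) ℝ := single i i 1 + single j j 1 with hD
  set F : Matrix (Fin k) (Fin k) ℝ := single i j 1 - single j i 1 with hF
  have hne : ∀ (a b x y : Fin k), b ≠ x →
      single a b (1:ℝ) * single x y (1:ℝ) = 0 := by
    intro a b x y h
    exact single_mul_single_of_ne (n := Fin k) (α := ℝ) (c := (1:ℝ)) a b x h 1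
  have hDD : D * D = D := by
    simp [hD, add_mul, mul_add, hne i i j j hij, hne j j i i hij.symm]
  have hDF : D * F = F := by
    simp [hD, hF, add_mul, mul_add, mul_sub, hne i i j i hij, hne j j i j hij.symm]
  have hFD : F * D = F := by
    simp [hD, hF, add_mul, sub_mul, mul_add, mul_sub, hne i j i i hij.symm,
      hne j i j j hij]
    abel
  have hFF : F * F = -D := by
    simp [hD, hF, sub_mul, mul_sub, hne i j i j hij.symm, hne j i j i hij]
    abel
  have hDT : Dᵀ = D := by simp [hD, transpose_add, transpose_stdBasis]
  have hFT : Fᵀ = -F := by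
    simp [hF, transpose_sub, transpose_stdBasis]
  have htrans : (1 + (c - 1) • D + s • F)ᵀ = 1 + (c - 1) • D - s • F := by
    simp only [transpose_add, transpose_smul, transpose_one, hDT, hFT, smul_neg]
    abel
  refine ⟨1 + (c - 1) • D + s • F, ?_, ?_⟩
  · rw [htrans]
    have expand : (1 + (c - 1) • D - s • F) * (1 + (c - 1) • D + s • F)
        = 1 + (((c-1) * (c-1) + (c-1) + (c-1) + s * s) • D
            + (((c-1) * s - s * (c-1)) • F)) := by
      simp only [add_mul, sub_mul, mul_add, mul_sub, one_mul, mul_one, smul_mul_assoc,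
        mul_smul_comm, hDD, hDF, hFD, hFF, smul_smul, smul_neg, add_smul, sub_smul,
        smul_add, smul_sub]
      module
    rw [expand]
    have e1 : ((c-1) * (c-1) + (c-1) + (c-1) + s * s) = 0 := by nlinarith
    have e2 : ((c-1) * s - s * (c-1)) = 0 := by ring
    rw [e1, e2, zero_smul, zero_smul, add_zero, add_zero]
  · intro S
    have h1 : trace (D * S) = S i i + S j j := by
      rw [hD, add_mul, trace_add, trace_stdBasis_mul, trace_stdBasis_mul]
    have h2 : trace (F * S) = S j i - S i j := by
      rw [hF, sub_mul, trace_sub, trace_stdBasis_mul, trace_stdBasis_mul]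
    rw [htrans]
    rw [sub_mul, add_mul, one_mul, smul_mul_assoc, smul_mul_assoc,
      trace_sub, trace_add, trace_smul, trace_smul, h1, h2]
    simp only [smul_eq_mul]
    ring

lemma householder (x : Fin k → ℝ) (hx : x ⬝ᵥ x ≠ 0) :
    ∃ R : Matrix (Fin k) (Fin k) ℝ, Rᵀ * R = 1 ∧
      ∀ S : Matrix (Fin k) (Fin k) ℝ,
        trace (Rᵀ * S) = trace S - (2 / (x ⬝ᵥ x)) * (x ⬝ᵥ (S *ᵥ x)) := by
  set d := x ⬝ᵥ x with hd
  set c := 2 / d with hc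
  set P : Matrix (Fin k) (Fin k) ℝ := vecMulVec x x with hP
  have hPT : Pᵀ = P := by
    ext a b
    simp [hP, vecMulVec_apply, mul_comm]
  have hPP : P * P = d • P := by
    ext a b
    simp only [hP, mul_apply, vecMulVec_apply, Matrix.smul_apply, smul_eq_mul, hd, dotProduct]
    rw [Finset.sum_mul]
    apply Finset.sum_congr rfl
    intros; ring
  have htrP : ∀ S : Matrix (Fin k) (Fin k) ℝ, trace (P * S) = x ⬝ᵥ (S *ᵥ x) := by
    intro S
    simp only [trace, diag_apply, mul_apply, hP, vecMulVec_apply, dotProduct, mulVec,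
      Finset.mul_sum]
    rw [Finset.sum_comm]
    apply Finset.sum_congr rfl
    intros a _
    apply Finset.sum_congr rfl
    intros b _
    ring
  have hRT : (1 - c • P)ᵀ = 1 - c • P := by
    rw [transpose_sub, transpose_one, transpose_smul, hPT]
  refine ⟨1 - c • P, ?_, ?_⟩
  · rw [hRT]
    have expand : (1 - c • P) * (1 - c • P) = 1 - (c + c - c * c * d) • P := by
      simp only [sub_mul, mul_sub, one_mul, mul_one, smul_mul_assoc, mul_smul_comm,
        hPP, smul_smul]
      module
    rw [expand]
    have : c + c - c * c * d = 0 := by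
      rw [hc]; field_simp; ring
    rw [this, zero_smul, sub_zero]
  · intro S
    rw [hRT, sub_mul, one_mul, smul_mul_assoc, trace_sub, trace_smul, htrP,
      smul_eq_mul, hc]

lemma exists_max_orth (M : Matrix (Fin k) (Fin k) ℝ) :
    ∃ Q : Matrix (Fin k) (Fin k) ℝ, Qᵀ * Q = 1 ∧
      ∀ R : Matrix (Fin k) (Fin k) ℝ, Rᵀ * R = 1 → trace (Rᵀ * M) ≤ trace (Qᵀ * M) := by
  set O : Set (Matrix (Fin k) (Fin k) ℝ) := {Q | Qᵀ * Q = 1} with hO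
  have hOclosed : IsClosed O :=
    isClosed_eq ((continuous_id.matrix_transpose).matrix_mul continuous_id) continuous_const
  have hK : IsCompact ((Set.univ.pi fun _ : Fin k => Set.univ.pi fun _ : Fin k =>
      Set.Icc (-1 : ℝ) 1) : Set (Matrix (Fin k) (Fin k) ℝ)) :=
    isCompact_univ_pi fun _ => isCompact_univ_pi fun _ => isCompact_Icc
  have hsub : O ⊆ (Set.univ.pi fun _ : Fin k => Set.univ.pi fun _ : Fin k =>
      Set.Icc (-1 : ℝ) 1) := by
    intro Q hQ
    have hQ' : ∀ j, ∑ x, Q x j * Q x j = 1 := by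
      intro j
      have := congrFun (congrFun hQ j) j
      simpa [mul_apply, one_apply] using this
    intro i _
    intro j _
    have h1 : Q i j * Q i j ≤ 1 := by
      rw [← hQ' j]
      refine Finset.single_le_sum (f := fun x => Q x j * Q x j)
        (fun x _ => mul_self_nonneg _) (Finset.mem_univ i)
    constructor <;> nlinarith [mul_self_nonneg (Q i j)]
  have hOcompact : IsCompact O := hK.of_isClosed_subset hOclosed hsub
  have hne : O.Nonempty := ⟨1, by simp [hO]⟩
  have hf : Continuous fun Q : Matrix (Fin k) (Fin k) ℝ => trace (Qᵀ * M) :=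
    ((continuous_id.matrix_transpose).matrix_mul continuous_const).matrix_trace
  obtain ⟨Q, hQO, hmax⟩ := hOcompact.exists_isMaxOn hne hf.continuousOn
  exact ⟨Q, hQO, fun R hR => hmax hR⟩

end helpers

/-- Lemma C.1 (aligning orthonormal bases via projections):
the minimum of `‖Z − Y Q‖_F` over orthogonal `Q` is at most `‖ZZᵀ − YYᵀ‖_F`.
(The minimum is attained, so we state it as an existence claim.) -/
theorem stmt2 (n k : ℕ) (Z Y : Matrix (Fin n) (Fin k) ℝ)
    (hZ : Zᵀ * Z = 1) (hY : Yᵀ * Y = 1) :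
    ∃ Q : Matrix (Fin k) (Fin k) ℝ, Qᵀ * Q = 1 ∧
      frob (Z - Y * Q) ≤ frob (Z * Zᵀ - Y * Yᵀ) := by
  classical
  set M : Matrix (Fin k) (Fin k) ℝ := Yᵀ * Z with hM
  obtain ⟨Q, hQ, hmax⟩ := exists_max_orth M
  set S : Matrix (Fin k) (Fin k) ℝ := Qᵀ * M with hS
  have hQQ : Q * Qᵀ = 1 := mul_eq_one_comm.mp hQ
  have hstep : ∀ R : Matrix (Fin k) (Fin k) ℝ, Rᵀ * R = 1 → trace (Rᵀ * S) ≤ trace S := by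
    intro R hR
    have h1 : (Q * R)ᵀ * (Q * R) = 1 := by
      rw [transpose_mul, Matrix.mul_assoc, ← Matrix.mul_assoc Qᵀ Q R, hQ, Matrix.one_mul, hR]
    have h2 := hmax (Q * R) h1
    calc trace (Rᵀ * S) = trace ((Q * R)ᵀ * M) := by
          rw [hS, transpose_mul, Matrix.mul_assoc]
      _ ≤ trace (Qᵀ * M) := h2
      _ = trace S := by rw [hS]
  -- quadratic form of S is nonnegative
  have hquad : ∀ x : Fin k → ℝ, 0 ≤ x ⬝ᵥ (S *ᵥ x) := by
    intro x
    by_cases hx : x = 0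
    · simp [hx]
    · have hd0 : x ⬝ᵥ x ≠ 0 := fun h => hx (dotProduct_self_eq_zero.mp h)
      have hxx : 0 ≤ x ⬝ᵥ x := Finset.sum_nonneg fun i _ => mul_self_nonneg (x i)
      obtain ⟨R, hR, htr⟩ := householder x hd0
      have hle := hstep R hR
      rw [htr S] at hle
      have hcpos : 0 < 2 / (x ⬝ᵥ x) := by
        apply div_pos two_pos (lt_of_le_of_ne hxx (Ne.symm hd0))
      nlinarith
  -- S is symmetric
  have hsym : ∀ i j, S i j = S j i := by
    intro i j
    rcases eq_or_ne i j with rfl | hij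
    · rfl
    · by_contra hb0
      set a := S i i + S j j with ha
      set b := S i j - S j i with hbdef
      have hbne : b ≠ 0 := sub_ne_zero.mpr hb0
      have hb2 : 0 < b ^ 2 := lt_of_le_of_ne (sq_nonneg b) (Ne.symm (pow_ne_zero 2 hbne))
      have hr2 : (0:ℝ) < a ^ 2 + b ^ 2 := by nlinarith [sq_nonneg a]
      set r := Real.sqrt (a ^ 2 + b ^ 2) with hrdef
      have hr : 0 < r := Real.sqrt_pos.mpr hr2
      have hrsq : r ^ 2 = a ^ 2 + b ^ 2 := Real.sq_sqrt hr2.le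
      have hcs : (a / r) ^ 2 + (b / r) ^ 2 = 1 := by
        field_simp
        linarith [hrsq]
      obtain ⟨R, hR, htr⟩ := rotation_facts i j hij (a / r) (b / r) hcs
      have hle := hstep R hR
      rw [htr S] at hle
      have h1 : (a / r - 1) * a + (b / r) * b ≤ 0 := by linarith
      have hrne : r ≠ 0 := ne_of_gt hr
      have h3 := mul_le_mul_of_nonneg_right h1 hr.le
      rw [zero_mul] at h3
      have h4 : ((a / r - 1) * a + (b / r) * b) * r = a * a - a * r + b * b := by
        field_simp
      rw [h4] at h3
      have hra : r ≤ a := by nlinarith [h3, hrsq, hr]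
      nlinarith [h3, hrsq, hr, hb2, hra]
  have hST : Sᵀ = S := by
    ext a b
    exact hsym b a
  have hherm : S.IsHermitian := by
    have : Sᴴ = S := by
      ext a b
      simp only [conjTranspose_apply, star_trivial]
      exact hsym b a
    exact this
  have hpsd : S.PosSemidef := .of_dotProduct_mulVec_nonneg hherm (fun x => by simpa using hquad x)
  -- 1 - S is PSD
  have hbound : ∀ x : Fin k → ℝ, x ⬝ᵥ (S *ᵥ x) ≤ x ⬝ᵥ x := by
    intro x
    have hSx : S *ᵥ x = Qᵀ *ᵥ (Yᵀ *ᵥ (Z *ᵥ x)) := by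
      rw [hS, hM, ← mulVec_mulVec, ← mulVec_mulVec]
    set u := Y *ᵥ (Q *ᵥ x) with hu
    set v := Z *ᵥ x with hv
    have hdot : x ⬝ᵥ (S *ᵥ x) = u ⬝ᵥ v := by
      rw [hSx, dotProduct_mulVec x Qᵀ _, vecMul_transpose,
        dotProduct_mulVec _ Yᵀ _, vecMul_transpose]
    have huu : u ⬝ᵥ u = x ⬝ᵥ x := by
      rw [hu, isometry_dot Y hY, isometry_dot Q hQ]
    have hvv : v ⬝ᵥ v = x ⬝ᵥ x := isometry_dot Z hZ x
    have hcs2 : (u ⬝ᵥ v) ^ 2 ≤ (u ⬝ᵥ u) * (v ⬝ᵥ v) := by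
      have h := Finset.sum_mul_sq_le_sq_mul_sq Finset.univ u v
      simpa only [dotProduct, pow_two] using h
    have hxx : 0 ≤ x ⬝ᵥ x := Finset.sum_nonneg fun i _ => mul_self_nonneg (x i)
    rw [hdot]
    nlinarith [hcs2, huu, hvv, hxx, sq_nonneg (u ⬝ᵥ v - x ⬝ᵥ x), sq_nonneg (u ⬝ᵥ v + x ⬝ᵥ x)]
  have h1psd : (1 - S).PosSemidef := by
    refine .of_dotProduct_mulVec_nonneg ?_ ?_
    · show (1 - S)ᴴ = 1 - S
      rw [conjTranspose_sub, hherm.eq, conjTranspose_one]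
    · intro x
      have := hbound x
      rw [sub_mulVec, one_mulVec, dotProduct_sub]
      simpa using sub_nonneg.mpr this
  have htr2 : trace (S * S) ≤ trace S := by
    have h0 : 0 ≤ trace (S * (1 - S)) := trace_mul_nonneg' hpsd h1psd
    rw [mul_sub, mul_one, trace_sub] at h0
    linarith
  have hSSMM : S * S = Mᵀ * M := by
    have h : Sᵀ * S = Mᵀ * M := by
      rw [hS, transpose_mul, transpose_transpose, Matrix.mul_assoc,
        ← Matrix.mul_assoc Q Qᵀ M, hQQ, Matrix.one_mul]
    nth_rewrite 1 [← hST]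
    exact h
  refine ⟨Q, hQ, ?_⟩
  rw [frob, frob]
  apply Real.sqrt_le_sqrt
  rw [sum_sq_eq_trace, sum_sq_eq_trace]
  -- expand the left side
  have eL : (Z - Y * Q)ᵀ * (Z - Y * Q)
      = Zᵀ * Z - (Y * Q)ᵀ * Z - Zᵀ * (Y * Q) + (Y * Q)ᵀ * (Y * Q) := by
    rw [transpose_sub, Matrix.sub_mul, Matrix.mul_sub, Matrix.mul_sub]
    abel
  have tA : trace (Zᵀ * Z) = trace (1 : Matrix (Fin k) (Fin k) ℝ) := by rw [hZ]
  have tB : trace ((Y * Q)ᵀ * Z) = trace S := by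
    rw [transpose_mul, Matrix.mul_assoc, ← hM, ← hS]
  have tC : trace (Zᵀ * (Y * Q)) = trace S := by
    rw [← trace_transpose, transpose_mul, transpose_transpose, tB]
  have tD : trace ((Y * Q)ᵀ * (Y * Q)) = trace (1 : Matrix (Fin k) (Fin k) ℝ) := by
    rw [transpose_mul, Matrix.mul_assoc, ← Matrix.mul_assoc Yᵀ Y Q, hY, Matrix.one_mul, hQ]
  have sumL : trace ((Z - Y * Q)ᵀ * (Z - Y * Q))
      = trace (1 : Matrix (Fin k) (Fin k) ℝ) * 2 - trace S * 2 := by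
    rw [eL, trace_add, trace_sub, trace_sub, tA, tB, tC, tD]
    ring
  -- expand the right side
  have hMT : Mᵀ = Zᵀ * Y := by rw [hM, transpose_mul, transpose_transpose]
  have eR : (Z * Zᵀ - Y * Yᵀ)ᵀ * (Z * Zᵀ - Y * Yᵀ)
      = Z * Zᵀ * (Z * Zᵀ) - Y * Yᵀ * (Z * Zᵀ) - Z * Zᵀ * (Y * Yᵀ) + Y * Yᵀ * (Y * Yᵀ) := by
    rw [transpose_sub, transpose_mul, transpose_mul, transpose_transpose,
      transpose_transpose, Matrix.sub_mul, Matrix.mul_sub, Matrix.mul_sub]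
    abel
  have t1 : trace (Z * Zᵀ * (Z * Zᵀ)) = trace (1 : Matrix (Fin k) (Fin k) ℝ) := by
    rw [Matrix.mul_assoc, trace_mul_comm, Matrix.mul_assoc, Matrix.mul_assoc Z Zᵀ Z,
      hZ, Matrix.mul_one, hZ]
  have t4 : trace (Y * Yᵀ * (Y * Yᵀ)) = trace (1 : Matrix (Fin k) (Fin k) ℝ) := by
    rw [Matrix.mul_assoc, trace_mul_comm, Matrix.mul_assoc, Matrix.mul_assoc Y Yᵀ Y,
      hY, Matrix.mul_one, hY]
  have t2 : trace (Z * Zᵀ * (Y * Yᵀ)) = trace (Mᵀ * M) := by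
    rw [Matrix.mul_assoc, trace_mul_comm, Matrix.mul_assoc, Matrix.mul_assoc Y Yᵀ Z,
      ← hM, ← Matrix.mul_assoc Zᵀ Y M, ← hMT]
  have t3 : trace (Y * Yᵀ * (Z * Zᵀ)) = trace (Mᵀ * M) := by
    rw [Matrix.mul_assoc, trace_mul_comm, Matrix.mul_assoc, Matrix.mul_assoc Z Zᵀ Y,
      ← hMT, ← Matrix.mul_assoc Yᵀ Z Mᵀ, ← hM, trace_mul_comm]
  have sumR : trace ((Z * Zᵀ - Y * Yᵀ)ᵀ * (Z * Zᵀ - Y * Yᵀ))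
      = trace (1 : Matrix (Fin k) (Fin k) ℝ) * 2 - trace (Mᵀ * M) * 2 := by
    rw [eR, trace_add, trace_sub, trace_sub, t1, t2, t3, t4]
    ring
  have hMMeq : trace (Mᵀ * M) = trace (S * S) := by rw [hSSMM]
  rw [sumL, sumR]
  linarith [htr2, hMMeq]

end
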